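/- Let 0 < α ≤ 1. There exists n₀(α) such that the following holds for all n ≥ n₀(α) and all natural numbers m with αn ≤ m ≤ n/2. Let 0 < δ < 1 and let G be a digraph on n vertices with minimum semi-degree δ⁰(G) ≥ δ·n. Then there exists a vertex subset W of V(G) with |W| = m such that δ⁰(G[W]) ≥ (δ − 2n^{−1/3})·m and δ⁰(G ∖ W) ≥ (δ − 2n^{−1/3})·(n − m). -/

import Mathlib

open Finset


theorem card_supersets {γ : Type*} [Fintype γ] [DecidableEq γ] (K : Finset γ) (m : ℕ)
    (hkm : K.card ≤ m) :
    ((powersetCard m (univ : Finset γ)).filter (fun W => K ⊆ W)).card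
      = (Fintype.card γ - K.card).choose (m - K.card) := by
  have h1 : ((powersetCard m (univ : Finset γ)).filter (fun W => K ⊆ W)).card
      = (powersetCard (m - K.card) (univ \ K)).card := by
    apply card_nbij' (fun W => W \ K) (fun A => A ∪ K)
    · intro W hW
      simp only [mem_coe, mem_filter, mem_powersetCard] at hW
      simp only [mem_coe, mem_powersetCard]
      exact ⟨sdiff_subset_sdiff hW.1.1 le_rfl, by rw [card_sdiff_of_subset hW.2, hW.1.2]⟩
    · intro A hA
      simp only [mem_coe, mem_powersetCard] at hA
      have hd : Disjoint A K := disjoint_of_subset_left hA.1 sdiff_disjoint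
      simp only [mem_coe, mem_filter, mem_powersetCard]
      refine ⟨⟨subset_univ _, ?_⟩, subset_union_right⟩
      rw [card_union_of_disjoint hd, hA.2]
      omega
    · intro W hW
      simp only [mem_coe, mem_filter, mem_powersetCard] at hW
      exact sdiff_union_of_subset hW.2
    · intro A hA
      simp only [mem_coe, mem_powersetCard] at hA
      have hd : Disjoint A K := disjoint_of_subset_left hA.1 sdiff_disjoint
      exact union_sdiff_cancel_right hd
  rw [h1, card_powersetCard, card_sdiff_of_subset (subset_univ K), card_univ]

theorem sum_choose_inter {γ : Type*} [Fintype γ] [DecidableEq γ] (N : Finset γ) (m k : ℕ)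
    (hkm : k ≤ m) :
    ∑ W ∈ powersetCard m (univ : Finset γ), ((N ∩ W).card.choose k)
      = N.card.choose k * (Fintype.card γ - k).choose (m - k) := by
  have step : ∀ W : Finset γ, (N ∩ W).card.choose k
      = ((powersetCard k N).filter (fun K => K ⊆ W)).card := by
    intro W
    rw [← card_powersetCard k (N ∩ W)]
    congr 1
    ext K
    simp only [mem_powersetCard, mem_filter, subset_inter_iff]
    tauto
  simp_rw [step, card_filter]
  rw [Finset.sum_comm]
  have inner : ∀ K ∈ powersetCard k N,
      (∑ W ∈ powersetCard m (univ : Finset γ), if K ⊆ W then 1 else 0)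
        = (Fintype.card γ - k).choose (m - k) := by
    intro K hK
    rw [mem_powersetCard] at hK
    rw [← card_filter, card_supersets K m (hK.2 ▸ hkm), hK.2]
  rw [Finset.sum_congr rfl inner, Finset.sum_const, card_powersetCard, smul_eq_mul]

theorem markov_bound {γ : Type*} [Fintype γ] [DecidableEq γ] (N : Finset γ) (m k a : ℕ)
    (hkm : k ≤ m) :
    ((powersetCard m (univ : Finset γ)).filter (fun W => a ≤ (N ∩ W).card)).card * a.choose k
      ≤ N.card.choose k * (Fintype.card γ - k).choose (m - k) := by
  rw [← sum_choose_inter N m k hkm, card_filter]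
  rw [Finset.sum_mul]
  calc (∑ W ∈ powersetCard m (univ : Finset γ), (if a ≤ (N ∩ W).card then 1 else 0) * a.choose k)
      ≤ ∑ W ∈ powersetCard m (univ : Finset γ), (N ∩ W).card.choose k := by
        apply Finset.sum_le_sum
        intro W _
        by_cases h : a ≤ (N ∩ W).card
        · simp only [h, if_true, one_mul]
          exact Nat.choose_le_choose k h
        · simp [h]
    _ = _ := rfl

theorem descFactorial_cross (d m n : ℕ) (hd : d ≤ n) (hm : m ≤ n) : ∀ k : ℕ,
    (d.descFactorial k : ℝ) * (m.descFactorial k : ℝ) * (n : ℝ) ^ k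
      ≤ ((d : ℝ) * m) ^ k * (n.descFactorial k : ℝ) := by
  intro k
  induction k with
  | zero => simp
  | succ k ih =>
    by_cases hdk : d < k + 1
    · rw [Nat.descFactorial_eq_zero_iff_lt.2 hdk]
      simp only [Nat.cast_zero, zero_mul]
      positivity
    by_cases hmk : m < k + 1
    · rw [Nat.descFactorial_eq_zero_iff_lt.2 hmk]
      rw [mul_comm (d.descFactorial (k+1) : ℝ)]
      simp only [Nat.cast_zero, zero_mul]
      positivity
    push_neg at hdk hmk
    have hkd : k ≤ d := by omega
    have hkm : k ≤ m := by omega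
    have hkn : k ≤ n := hkd.trans hd
    rw [Nat.descFactorial_succ, Nat.descFactorial_succ, Nat.descFactorial_succ]
    push_cast [hkd, hkm, hkn]
    have key : ((d : ℝ) - k) * ((m : ℝ) - k) * n ≤ (d : ℝ) * m * ((n : ℝ) - k) := by
      have h1 : (0:ℝ) ≤ (k:ℝ) * ((d:ℝ) * ((n:ℝ) - m)) := by
        apply mul_nonneg (by positivity)
        apply mul_nonneg (by positivity)
        have : (m:ℝ) ≤ n := by exact_mod_cast hm
        linarith
      have h2 : (0:ℝ) ≤ (k:ℝ) * ((n:ℝ) * ((m:ℝ) - k)) := by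
        apply mul_nonneg (by positivity)
        apply mul_nonneg (by positivity)
        have : (k:ℝ) ≤ m := by exact_mod_cast hkm
        linarith
      nlinarith [h1, h2]
    have hnn1 : (0:ℝ) ≤ (d.descFactorial k : ℝ) * (m.descFactorial k : ℝ) * (n:ℝ)^k := by positivity
    have hnn2 : (0:ℝ) ≤ ((d:ℝ) - k) * ((m:ℝ) - k) := by
      apply mul_nonneg <;> [skip; skip] <;>
      · rw [sub_nonneg]; exact_mod_cast ‹_›
    calc ((d:ℝ) - k) * d.descFactorial k * (((m:ℝ) - k) * m.descFactorial k) * ((n:ℝ)^k * n)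
        = (((d:ℝ) - k) * ((m:ℝ) - k) * n) * ((d.descFactorial k : ℝ) * m.descFactorial k * (n:ℝ)^k) := by ring
      _ ≤ ((d:ℝ) * m * ((n:ℝ) - k)) * (((d:ℝ)*m)^k * (n.descFactorial k : ℝ)) := by
          apply mul_le_mul key ih hnn1
          nlinarith [hnn2, (by positivity : (0:ℝ) ≤ (n:ℝ))]
      _ = ((d:ℝ)*m)^(k+1) * (((n:ℝ) - k) * (n.descFactorial k : ℝ)) := by ring

theorem descFactorial_lower (c : ℝ) (hc : 0 ≤ c) : ∀ (k a : ℕ), c + k ≤ (a : ℝ) + 1 →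
    c ^ k ≤ (a.descFactorial k : ℝ) := by
  intro k
  induction k with
  | zero => intro a _; simp
  | succ k ih =>
    intro a h
    have hak : (k : ℝ) ≤ a := by push_cast at h ⊢; linarith
    have hak' : k ≤ a := by exact_mod_cast hak
    rw [Nat.descFactorial_succ]
    push_cast [hak']
    have h1 : c ≤ (a : ℝ) - k := by push_cast at h; linarith
    have h2 : c ^ k ≤ (a.descFactorial k : ℝ) := ih a (by push_cast at h ⊢; linarith)
    calc c ^ (k+1) = c * c ^ k := by ring
      _ ≤ ((a:ℝ) - k) * (a.descFactorial k : ℝ) :=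
          mul_le_mul h1 h2 (by positivity) (by linarith)

-- Step C ingredient: binomial single term

theorem one_add_pow_ge (t : ℝ) (ht : 0 ≤ t) (k : ℕ) (hk : 4 ≤ k) :
    (k.choose 4 : ℝ) * t ^ 4 ≤ (1 + t) ^ k := by
  rw [add_comm, add_pow]
  have h4 : 4 ∈ Finset.range (k + 1) := by simp; omega
  calc (k.choose 4 : ℝ) * t ^ 4 = t ^ 4 * 1 ^ (k - 4) * (k.choose 4 : ℝ) := by ring
    _ ≤ ∑ i ∈ Finset.range (k+1), t ^ i * 1 ^ (k - i) * (k.choose i : ℝ) := by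
        apply Finset.single_le_sum (f := fun i => t ^ i * 1 ^ (k - i) * (k.choose i : ℝ)) _ h4
        intro i _
        positivity

set_option maxHeartbeats 1000000 in
theorem key_bound {n : ℕ} (N : Finset (Fin n)) (m'' k : ℕ) (s : ℝ)
    (hd0 : 0 < N.card) (hm0 : 0 < m'') (hmn : m'' ≤ n)
    (hks : (k : ℝ) ≤ s / 2) (hsk : s / 2 ≤ (k : ℝ) + 1) (hk7 : 7 ≤ k) (hkm : k ≤ m'')
    (hs16 : 16 ≤ s)
    (hbig : 96 * ((n : ℝ) + 1) ≤ (s ^ 2 / (8 * n)) ^ 4) :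
    (((powersetCard m'' (univ : Finset (Fin n))).filter
        (fun W => (N.card : ℝ) * m'' / n + s ≤ ((N ∩ W).card : ℝ))).card : ℝ) * (4 * (n + 1))
      ≤ (n.choose m'' : ℝ) := by
  classical
  set d := N.card with hdef
  have hdn : d ≤ n := by
    calc d ≤ (univ : Finset (Fin n)).card := card_le_card (subset_univ N)
    _ = n := by simp
  have hn0 : 0 < n := lt_of_lt_of_le hm0 hmn
  have hnR : (0:ℝ) < n := by exact_mod_cast hn0
  set μ : ℝ := (d : ℝ) * m'' / n with hμdef
  have hμ0 : 0 < μ := by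
    apply div_pos _ hnR
    have h1 : (0:ℝ) < d := by exact_mod_cast hd0
    have h2 : (0:ℝ) < m'' := by exact_mod_cast hm0
    positivity
  have hμn : μ ≤ (n : ℝ) := by
    rw [div_le_iff₀ hnR]
    have h1 : (d:ℝ) ≤ n := by exact_mod_cast hdn
    have h2 : (m'':ℝ) ≤ n := by exact_mod_cast hmn
    nlinarith
  have hs0 : (0:ℝ) < s := by linarith
  set a : ℕ := ⌈μ + s⌉₊ with hadef
  have ha_ge : μ + s ≤ (a : ℝ) := Nat.le_ceil _
  have hsub : ((powersetCard m'' (univ : Finset (Fin n))).filter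
        (fun W => μ + s ≤ ((N ∩ W).card : ℝ))).card
      ≤ ((powersetCard m'' (univ : Finset (Fin n))).filter
        (fun W => a ≤ (N ∩ W).card)).card := by
    apply card_le_card
    intro W hW
    simp only [mem_filter] at hW ⊢
    exact ⟨hW.1, Nat.ceil_le.2 hW.2⟩
  have hmarkov := markov_bound N m'' k a hkm
  rw [show Fintype.card (Fin n) = n by simp] at hmarkov
  have hka : k ≤ a := by
    have : (k:ℝ) ≤ a := by linarith
    exact_mod_cast this
  have hak_pos : 0 < a.choose k := Nat.choose_pos hka
  have hnk_pos : 0 < n.choose k := Nat.choose_pos (hkm.trans hmn)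
  have hnkm_pos : 0 < (n - k).choose (m'' - k) := Nat.choose_pos (by omega)
  have hnm_pos : 0 < n.choose m'' := Nat.choose_pos hmn
  have hk7R : (7:ℝ) ≤ (k:ℝ) := by exact_mod_cast hk7
  -- the core real inequality
  have core : 4 * ((n:ℝ) + 1) * (d.choose k : ℝ) * (m''.choose k : ℝ)
      ≤ (n.choose k : ℝ) * (a.choose k : ℝ) := by
    have hDF : ∀ x : ℕ, (x.descFactorial k : ℝ) = (k.factorial : ℝ) * (x.choose k : ℝ) := by
      intro x
      rw [Nat.descFactorial_eq_factorial_mul_choose]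
      push_cast
      ring
    have hkfac : (0:ℝ) < (k.factorial : ℝ) := by exact_mod_cast k.factorial_pos
    rw [← mul_le_mul_iff_right₀ (by positivity : (0:ℝ) < (k.factorial : ℝ) * (k.factorial : ℝ))]
    have lhs_eq : (k.factorial : ℝ) * (k.factorial : ℝ) *
        (4 * ((n:ℝ) + 1) * (d.choose k : ℝ) * (m''.choose k : ℝ))
        = 4 * ((n:ℝ)+1) * ((d.descFactorial k : ℝ) * (m''.descFactorial k : ℝ)) := by
      rw [hDF, hDF]; ring
    have rhs_eq : (k.factorial : ℝ) * (k.factorial : ℝ) *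
        ((n.choose k : ℝ) * (a.choose k : ℝ))
        = (n.descFactorial k : ℝ) * (a.descFactorial k : ℝ) := by
      rw [hDF, hDF]; ring
    rw [lhs_eq, rhs_eq]
    have hμpow : μ ^ k * (n:ℝ) ^ k = ((d:ℝ) * m'') ^ k := by
      rw [hμdef, div_pow, div_mul_cancel₀]
      positivity
    -- Step A
    have hA : (d.descFactorial k : ℝ) * (m''.descFactorial k : ℝ)
        ≤ μ ^ k * (n.descFactorial k : ℝ) := by
      have hcross := descFactorial_cross d m'' n hdn hmn k
      have hnpow : (0:ℝ) < (n:ℝ) ^ k := by positivity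
      rw [← mul_le_mul_iff_left₀ hnpow]
      calc (d.descFactorial k : ℝ) * (m''.descFactorial k : ℝ) * (n:ℝ)^k
          ≤ ((d:ℝ) * m'') ^ k * (n.descFactorial k : ℝ) := hcross
        _ = μ ^ k * (n.descFactorial k : ℝ) * (n:ℝ)^k := by rw [← hμpow]; ring
    -- Step B
    have hB : (μ + s/2) ^ k ≤ (a.descFactorial k : ℝ) := by
      apply descFactorial_lower (μ + s/2) (by linarith) k a
      linarith
    -- Step C
    have hC : 4 * ((n:ℝ)+1) * μ ^ k ≤ (μ + s/2) ^ k := by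
      set t : ℝ := s / (2 * μ) with htdef
      have ht0 : 0 < t := by positivity
      have hfac : μ + s/2 = μ * (1 + t) := by
        field_simp [htdef]
        rw [htdef]; field_simp
      rw [hfac, mul_pow]
      have hbin := one_add_pow_ge t ht0.le k (by omega)
      have h24 : (k.descFactorial 4 : ℝ) = (k.choose 4 : ℝ) * 24 := by
        rw [Nat.descFactorial_eq_factorial_mul_choose]
        push_cast [Nat.factorial]
        ring
      have hchoose4 : ((k:ℝ) - 3) ^ 4 ≤ (k.choose 4 : ℝ) * 24 := by
        rw [← h24]
        apply descFactorial_lower ((k:ℝ) - 3) (by linarith) 4 k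
        push_cast
        linarith
      have htlb : s / (2 * n) ≤ t := by
        rw [htdef]
        apply div_le_div_of_nonneg_left hs0.le (by positivity)
        linarith
      have hk3 : s / 4 ≤ (k:ℝ) - 3 := by linarith
      have hprod : s^2 / (8 * n) ≤ ((k:ℝ) - 3) * t := by
        calc s^2 / (8*n) = (s/4) * (s/(2*n)) := by ring
          _ ≤ ((k:ℝ) - 3) * t := by
              apply mul_le_mul hk3 htlb (by positivity) (by linarith)
      have h1t : 4 * ((n:ℝ)+1) ≤ (1 + t)^k := by
        calc 4 * ((n:ℝ)+1) = 96 * ((n:ℝ)+1) / 24 := by ring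
          _ ≤ (s^2/(8*n))^4 / 24 := by linarith
          _ ≤ (((k:ℝ) - 3) * t)^4 / 24 := by
              have := pow_le_pow_left₀ (by positivity : (0:ℝ) ≤ s^2/(8*n)) hprod 4
              linarith
          _ = ((k:ℝ) - 3)^4 * t^4 / 24 := by ring
          _ ≤ ((k.choose 4 : ℝ) * 24) * t^4 / 24 := by
              have h4 : (0:ℝ) ≤ t^4 := by positivity
              have hmm := mul_le_mul_of_nonneg_right hchoose4 h4
              linarith
          _ = (k.choose 4 : ℝ) * t^4 := by ring
          _ ≤ (1 + t)^k := hbin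
      calc 4 * ((n:ℝ)+1) * μ ^ k ≤ (1+t)^k * μ^k :=
            mul_le_mul_of_nonneg_right h1t (by positivity)
        _ = μ^k * (1+t)^k := by ring
    calc 4 * ((n:ℝ)+1) * ((d.descFactorial k : ℝ) * (m''.descFactorial k : ℝ))
        ≤ 4 * ((n:ℝ)+1) * (μ ^ k * (n.descFactorial k : ℝ)) :=
          mul_le_mul_of_nonneg_left hA (by positivity)
      _ = (4 * ((n:ℝ)+1) * μ ^ k) * (n.descFactorial k : ℝ) := by ring
      _ ≤ (μ + s/2)^k * (n.descFactorial k : ℝ) :=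
          mul_le_mul_of_nonneg_right hC (by positivity)
      _ ≤ (a.descFactorial k : ℝ) * (n.descFactorial k : ℝ) :=
          mul_le_mul_of_nonneg_right hB (by positivity)
      _ = (n.descFactorial k : ℝ) * (a.descFactorial k : ℝ) := by ring
  -- combine
  have hmm_posR : (0:ℝ) < (m''.choose k : ℝ) := by exact_mod_cast Nat.choose_pos hkm
  have hak_posR : (0:ℝ) < (a.choose k : ℝ) := by exact_mod_cast hak_pos
  have hidR : (n.choose m'' : ℝ) * (m''.choose k : ℝ)
      = (n.choose k : ℝ) * ((n - k).choose (m'' - k) : ℝ) := by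
    exact_mod_cast congrArg (Nat.cast (R := ℝ)) (Nat.choose_mul (n := n) hkm)
  have hsubR : (((powersetCard m'' (univ : Finset (Fin n))).filter
        (fun W => μ + s ≤ ((N ∩ W).card : ℝ))).card : ℝ)
      ≤ (((powersetCard m'' (univ : Finset (Fin n))).filter
        (fun W => a ≤ (N ∩ W).card)).card : ℝ) := by exact_mod_cast hsub
  have hmarkovR : (((powersetCard m'' (univ : Finset (Fin n))).filter
        (fun W => a ≤ (N ∩ W).card)).card : ℝ) * (a.choose k : ℝ)
      ≤ (d.choose k : ℝ) * ((n - k).choose (m'' - k) : ℝ) := by exact_mod_cast hmarkov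
  set A : ℝ := (((powersetCard m'' (univ : Finset (Fin n))).filter
        (fun W => a ≤ (N ∩ W).card)).card : ℝ)
  set F : ℝ := (((powersetCard m'' (univ : Finset (Fin n))).filter
        (fun W => μ + s ≤ ((N ∩ W).card : ℝ))).card : ℝ)
  rw [← mul_le_mul_iff_left₀ (mul_pos hak_posR hmm_posR)]
  have hF0 : 0 ≤ F := Nat.cast_nonneg _
  have hA0 : 0 ≤ A := Nat.cast_nonneg _
  calc F * (4 * ((n:ℝ) + 1)) * ((a.choose k : ℝ) * (m''.choose k : ℝ))
      ≤ A * (4 * ((n:ℝ) + 1)) * ((a.choose k : ℝ) * (m''.choose k : ℝ)) := by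
        apply mul_le_mul_of_nonneg_right (mul_le_mul_of_nonneg_right hsubR (by positivity))
        positivity
    _ = (A * (a.choose k : ℝ)) * (4 * ((n:ℝ)+1) * (m''.choose k : ℝ)) := by ring
    _ ≤ ((d.choose k : ℝ) * ((n - k).choose (m'' - k) : ℝ))
          * (4 * ((n:ℝ)+1) * (m''.choose k : ℝ)) := by
        apply mul_le_mul_of_nonneg_right hmarkovR
        positivity
    _ = (4 * ((n:ℝ)+1) * (d.choose k : ℝ) * (m''.choose k : ℝ))
          * ((n - k).choose (m'' - k) : ℝ) := by ring
    _ ≤ ((n.choose k : ℝ) * (a.choose k : ℝ)) * ((n - k).choose (m'' - k) : ℝ) :=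
        mul_le_mul_of_nonneg_right core (by positivity)
    _ = ((n.choose k : ℝ) * ((n - k).choose (m'' - k) : ℝ)) * (a.choose k : ℝ) := by ring
    _ = ((n.choose m'' : ℝ) * (m''.choose k : ℝ)) * (a.choose k : ℝ) := by rw [← hidR]
    _ = (n.choose m'' : ℝ) * ((a.choose k : ℝ) * (m''.choose k : ℝ)) := by ring

/-- lower-tail count bounded by upper-tail count for complements -/
theorem lower_tail_count {n m : ℕ} (N : Finset (Fin n)) (s : ℝ) (hn0 : 0 < n) :
    ((powersetCard m (univ : Finset (Fin n))).filter
        (fun W => ((N ∩ W).card : ℝ) ≤ (N.card : ℝ) * m / n - s)).card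
      ≤ ((powersetCard (n - m) (univ : Finset (Fin n))).filter
        (fun W => (N.card : ℝ) * (n - m) / n + s ≤ ((N ∩ W).card : ℝ))).card := by
  classical
  apply card_le_card_of_injOn (fun W => Wᶜ)
  · intro W hW
    simp only [mem_coe, mem_filter, mem_powersetCard] at hW ⊢
    obtain ⟨⟨-, hWc⟩, hb⟩ := hW
    have hcompl : Wᶜ.card = n - m := by
      rw [card_compl, hWc]; simp
    refine ⟨⟨subset_univ _, hcompl⟩, ?_⟩
    have hsplit : (N ∩ W).card + (N ∩ Wᶜ).card = N.card := by
      have h1 : N \ W = N ∩ Wᶜ := by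
        ext x; simp [mem_sdiff, mem_inter, mem_compl]
      rw [← h1]
      exact card_inter_add_card_sdiff N W
    have hdn : N.card ≤ n := by
      calc N.card ≤ (univ : Finset (Fin n)).card := card_le_card (subset_univ N)
        _ = n := by simp
    have hnR : (0:ℝ) < n := by exact_mod_cast hn0
    have hcast : ((N ∩ Wᶜ).card : ℝ) = (N.card : ℝ) - ((N ∩ W).card : ℝ) := by
      have := hsplit
      push_cast [← this]
      ring
    rw [hcast]
    have halg : (N.card : ℝ) * ((n:ℝ) - m) / n = (N.card : ℝ) - (N.card : ℝ) * m / n := by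
      field_simp
    rw [halg]
    linarith
  · intro W _ W' _ h
    simpa using congrArg compl h

/-- There is an `m`-set `W` such that `|N_i ∩ W|` is within `s` of its mean, for every
set in the family `Ns`. -/
theorem exists_good {n m k : ℕ} (Ns : Fin n × Bool → Finset (Fin n)) (s : ℝ)
    (hd0 : ∀ i, 0 < (Ns i).card)
    (hm0 : 0 < m) (h2m : 2 * m ≤ n)
    (hks : (k : ℝ) ≤ s / 2) (hsk : s / 2 ≤ (k : ℝ) + 1) (hk7 : 7 ≤ k) (hkm : k ≤ m)
    (hs16 : 16 ≤ s)
    (hbig : 96 * ((n : ℝ) + 1) ≤ (s ^ 2 / (8 * n)) ^ 4) :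
    ∃ W : Finset (Fin n), W.card = m ∧ ∀ i,
      ((Ns i).card : ℝ) * m / n - s < (((Ns i) ∩ W).card : ℝ) ∧
      (((Ns i) ∩ W).card : ℝ) < ((Ns i).card : ℝ) * m / n + s := by
  classical
  have hmn : m ≤ n := by omega
  have hn0 : 0 < n := by omega
  have hnR : (0:ℝ) < n := by exact_mod_cast hn0
  set P := powersetCard m (univ : Finset (Fin n)) with hP
  set Bad : Finset (Finset (Fin n)) := (univ : Finset (Fin n × Bool)).biUnion (fun i =>
      (P.filter (fun W => ((Ns i).card : ℝ) * m / n + s ≤ (((Ns i) ∩ W).card : ℝ)))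
      ∪ (P.filter (fun W => (((Ns i) ∩ W).card : ℝ) ≤ ((Ns i).card : ℝ) * m / n - s)))
    with hBad
  -- per-event bounds
  have hup : ∀ i, ((P.filter (fun W => ((Ns i).card : ℝ) * m / n + s
        ≤ (((Ns i) ∩ W).card : ℝ))).card : ℝ) ≤ (n.choose m : ℝ) / (4 * (n + 1)) := by
    intro i
    have := key_bound (Ns i) m k s (hd0 i) hm0 hmn hks hsk hk7 hkm hs16 hbig
    rw [le_div_iff₀ (by positivity)]
    exact this
  have hlow : ∀ i, ((P.filter (fun W => (((Ns i) ∩ W).card : ℝ)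
        ≤ ((Ns i).card : ℝ) * m / n - s)).card : ℝ) ≤ (n.choose m : ℝ) / (4 * (n + 1)) := by
    intro i
    have h1 := lower_tail_count (m := m) (Ns i) s hn0
    have h2 := key_bound (Ns i) (n - m) k s (hd0 i) (by omega) (by omega) hks hsk hk7
      (by omega) hs16 hbig
    have hcast : (((n - m : ℕ) : ℝ)) = (n : ℝ) - m := by push_cast [hmn]; ring
    rw [hcast] at h2
    have hsymm : n.choose (n - m) = n.choose m := Nat.choose_symm hmn
    rw [hsymm] at h2
    rw [le_div_iff₀ (by positivity)]
    calc ((P.filter (fun W => (((Ns i) ∩ W).card : ℝ)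
            ≤ ((Ns i).card : ℝ) * m / n - s)).card : ℝ) * (4 * (n+1))
        ≤ (((powersetCard (n - m) (univ : Finset (Fin n))).filter
            (fun W => ((Ns i).card : ℝ) * ((n : ℝ) - m) / n + s
              ≤ (((Ns i) ∩ W).card : ℝ))).card : ℝ) * (4 * (n+1)) := by
          apply mul_le_mul_of_nonneg_right _ (by positivity)
          exact_mod_cast h1
      _ ≤ (n.choose m : ℝ) := h2
  -- total bad count
  have hBadcard : (Bad.card : ℝ) < (P.card : ℝ) := by
    have hcard : (Bad.card : ℝ) ≤ (2 * n : ℝ) * (2 * ((n.choose m : ℝ) / (4 * (n+1)))) := by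
      have h1 : Bad.card ≤ ∑ i : Fin n × Bool,
          ((P.filter (fun W => ((Ns i).card : ℝ) * m / n + s ≤ (((Ns i) ∩ W).card : ℝ)))
          ∪ (P.filter (fun W => (((Ns i) ∩ W).card : ℝ) ≤ ((Ns i).card : ℝ) * m / n - s))).card :=
        card_biUnion_le
      have h2 : (Bad.card : ℝ) ≤ ∑ i : Fin n × Bool,
          (((P.filter (fun W => ((Ns i).card : ℝ) * m / n + s ≤ (((Ns i) ∩ W).card : ℝ)))
          ∪ (P.filter (fun W => (((Ns i) ∩ W).card : ℝ) ≤ ((Ns i).card : ℝ) * m / n - s))).card : ℝ) := by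
        exact_mod_cast h1
      calc (Bad.card : ℝ) ≤ _ := h2
        _ ≤ ∑ _i : Fin n × Bool, 2 * ((n.choose m : ℝ) / (4 * (n+1))) := by
            apply Finset.sum_le_sum
            intro i _
            have hcu := card_union_le
              (P.filter (fun W => ((Ns i).card : ℝ) * m / n + s ≤ (((Ns i) ∩ W).card : ℝ)))
              (P.filter (fun W => (((Ns i) ∩ W).card : ℝ) ≤ ((Ns i).card : ℝ) * m / n - s))
            have hcuR : (((P.filter (fun W => ((Ns i).card : ℝ) * m / n + s ≤ (((Ns i) ∩ W).card : ℝ)))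
                ∪ (P.filter (fun W => (((Ns i) ∩ W).card : ℝ) ≤ ((Ns i).card : ℝ) * m / n - s))).card : ℝ)
                ≤ ((P.filter (fun W => ((Ns i).card : ℝ) * m / n + s ≤ (((Ns i) ∩ W).card : ℝ))).card : ℝ)
                  + ((P.filter (fun W => (((Ns i) ∩ W).card : ℝ) ≤ ((Ns i).card : ℝ) * m / n - s)).card : ℝ) := by
              exact_mod_cast hcu
            have hu := hup i
            have hl := hlow i
            linarith
        _ = (2 * n : ℝ) * (2 * ((n.choose m : ℝ) / (4 * (n+1)))) := by
            rw [Finset.sum_const, nsmul_eq_mul, card_univ]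
            have hcc : ((Fintype.card (Fin n × Bool) : ℕ) : ℝ) = 2 * n := by
              rw [Fintype.card_prod]
              push_cast
              simp
              ring
            rw [hcc]
    have hPcard : (P.card : ℝ) = (n.choose m : ℝ) := by
      rw [hP, card_powersetCard]
      simp
    have hpos : (0:ℝ) < (n.choose m : ℝ) := by
      exact_mod_cast Nat.choose_pos hmn
    rw [hPcard]
    calc (Bad.card : ℝ) ≤ (2 * n : ℝ) * (2 * ((n.choose m : ℝ) / (4 * (n+1)))) := hcard
      _ = (n.choose m : ℝ) * ((n:ℝ) / ((n:ℝ)+1)) := by field_simp; ring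
      _ < (n.choose m : ℝ) * 1 := by
          apply mul_lt_mul_of_pos_left _ hpos
          rw [div_lt_one (by positivity)]
          linarith
      _ = (n.choose m : ℝ) := mul_one _
  -- extract a good W
  have hBadlt : Bad.card < P.card := by exact_mod_cast hBadcard
  obtain ⟨W, hW⟩ : (P \ Bad).Nonempty := by
    apply card_pos.1
    have hle := le_card_sdiff Bad P
    omega
  rw [mem_sdiff] at hW
  obtain ⟨hWP, hWBad⟩ := hW
  refine ⟨W, ?_, ?_⟩
  · rw [hP, mem_powersetCard] at hWP
    exact hWP.2
  · intro i
    have hnot : W ∉ (P.filter (fun W => ((Ns i).card : ℝ) * m / n + s ≤ (((Ns i) ∩ W).card : ℝ)))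
        ∪ (P.filter (fun W => (((Ns i) ∩ W).card : ℝ) ≤ ((Ns i).card : ℝ) * m / n - s)) := by
      intro hmem
      exact hWBad (mem_biUnion.2 ⟨i, mem_univ i, hmem⟩)
    rw [mem_union, not_or] at hnot
    obtain ⟨h1, h2⟩ := hnot
    rw [mem_filter, not_and] at h1 h2
    constructor
    · have := h2 hWP
      push_neg at this
      linarith
    · have := h1 hWP
      push_neg at this
      linarith

set_option maxHeartbeats 1600000 in
/-- For `0 < α ≤ 1` there is `n₀(α)` such that for all `n ≥ n₀(α)`, all `m` with
`α n ≤ m ≤ n / 2`, all `0 < δ < 1` and every loopless digraph `G` on `n` vertices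
with minimum semi-degree at least `δ n`, there is a vertex subset `W` of size `m`
such that `δ⁰(G[W]) ≥ (δ − 2 n^{−1/3}) m` and
`δ⁰(G ∖ W) ≥ (δ − 2 n^{−1/3}) (n − m)`. -/
theorem digraph_split_semiDegree (α : ℝ) (hα0 : 0 < α) (hα1 : α ≤ 1) :
    ∃ n₀ : ℕ, ∀ n : ℕ, n₀ ≤ n →
    ∀ m : ℕ, α * n ≤ (m : ℝ) → (m : ℝ) ≤ (n : ℝ) / 2 →
    ∀ δ : ℝ, 0 < δ → δ < 1 →
    ∀ G : Fin n → Fin n → Prop, (∀ v, ¬ G v v) →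
    (∀ v : Fin n,
      δ * n ≤ (Nat.card {u : Fin n // G v u} : ℝ) ∧
      δ * n ≤ (Nat.card {u : Fin n // G u v} : ℝ)) →
    ∃ W : Finset (Fin n), W.card = m ∧
      (∀ v ∈ W,
        (δ - 2 * (n : ℝ) ^ (-(1 / 3 : ℝ))) * m
          ≤ (Nat.card {u : Fin n // u ∈ W ∧ G v u} : ℝ) ∧
        (δ - 2 * (n : ℝ) ^ (-(1 / 3 : ℝ))) * m
          ≤ (Nat.card {u : Fin n // u ∈ W ∧ G u v} : ℝ)) ∧
      (∀ v ∉ W,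
        (δ - 2 * (n : ℝ) ^ (-(1 / 3 : ℝ))) * ((n : ℝ) - m)
          ≤ (Nat.card {u : Fin n // u ∉ W ∧ G v u} : ℝ) ∧
        (δ - 2 * (n : ℝ) ^ (-(1 / 3 : ℝ))) * ((n : ℝ) - m)
          ≤ (Nat.card {u : Fin n // u ∉ W ∧ G u v} : ℝ)) := by
  classical
  set c : ℝ := 3072 / α ^ 8 with hc
  have hc1 : 1 ≤ c := by
    rw [hc, le_div_iff₀ (by positivity)]
    have : α ^ 8 ≤ 1 := pow_le_one₀ hα0.le hα1
    linarith
  refine ⟨⌈c ^ 3⌉₊ + 1, fun n hn m hmα hm2 δ hδ0 hδ1 G hloop hdeg => ?_⟩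
  -- basic facts about n and x := n^(1/3)
  have hn1 : 1 ≤ n := by
    have := Nat.le_ceil (c ^ 3)
    omega
  have hnR : (0:ℝ) < n := by exact_mod_cast hn1
  set x : ℝ := (n : ℝ) ^ ((1:ℝ)/3) with hx
  have hx0 : 0 < x := Real.rpow_pos_of_pos hnR _
  have hx3 : x ^ 3 = n := by
    rw [hx, ← Real.rpow_natCast ((n:ℝ) ^ ((1:ℝ)/3)) 3, ← Real.rpow_mul hnR.le]
    norm_num
  have hxc : c ≤ x := by
    have h1 : c ^ 3 ≤ (n : ℝ) := by
      have h2 : (⌈c ^ 3⌉₊ : ℝ) ≤ n := by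
        exact_mod_cast Nat.le_of_succ_le hn
      linarith [Nat.le_ceil (c ^ 3)]
    rw [← hx3] at h1
    exact le_of_pow_le_pow_left₀ (by norm_num) hx0.le h1
  have hx1 : 1 ≤ x := hc1.trans hxc
  have hεx : (n : ℝ) ^ (-(1/3 : ℝ)) = x⁻¹ := by
    rw [hx, ← Real.rpow_neg hnR.le]
  set ε : ℝ := 2 * (n : ℝ) ^ (-(1/3 : ℝ)) with hεdef
  have hε0 : 0 < ε := by
    rw [hεdef, hεx]; positivity
  have hε2 : ε ≤ 2 := by
    rw [hεdef, hεx]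
    have : x⁻¹ ≤ 1 := by
      rw [inv_le_one_iff₀]; right; exact hx1
    linarith
  set s : ℝ := ε * m with hs
  -- m bounds
  have hmnR : (m : ℝ) ≥ α * n := hmα
  have hm0 : 0 < m := by
    by_contra h
    push_neg at h
    interval_cases m
    simp at hmα
    nlinarith
  have h2m : 2 * m ≤ n := by
    have : (2 * m : ℝ) ≤ n := by push_cast; linarith
    exact_mod_cast this
  -- s bounds
  have hsx : 2 * α * x ^ 2 ≤ s := by
    rw [hs, hεdef, hεx]
    have h1 : α * (n:ℝ) ≤ m := hmα
    have h2 : 2 * x⁻¹ * (α * n) ≤ 2 * x⁻¹ * m := by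
      apply mul_le_mul_of_nonneg_left h1 (by positivity)
    calc 2 * α * x ^ 2 = 2 * x⁻¹ * (α * x ^ 3) := by
          field_simp
      _ = 2 * x⁻¹ * (α * n) := by rw [hx3]
      _ ≤ 2 * x⁻¹ * m := h2
      _ = 2 * x⁻¹ * m := rfl
  have hs16 : 16 ≤ s := by
    have hcx : 8 / α ≤ x := by
      have h8 : 8 / α ≤ c := by
        rw [hc, div_le_div_iff₀ hα0 (by positivity)]
        nlinarith [pow_le_one₀ hα0.le hα1 (n := 7), pow_pos hα0 7]
      linarith
    have : 8 ≤ α * x ^ 2 := by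
      rw [div_le_iff₀ hα0] at hcx
      nlinarith
    linarith [hsx]
  have hs0 : 0 < s := by linarith
  set k : ℕ := ⌊s / 2⌋₊ with hk
  have hks : (k : ℝ) ≤ s / 2 := Nat.floor_le (by positivity)
  have hsk : s / 2 ≤ (k : ℝ) + 1 := le_of_lt (Nat.lt_floor_add_one _)
  have hk7 : 7 ≤ k := by
    rw [hk]
    apply Nat.le_floor
    push_cast
    linarith
  have hkm : k ≤ m := by
    have h1 : (k : ℝ) ≤ m := by
      have hsm : s ≤ 2 * m := by
        rw [hs, hεdef, hεx]
        have : x⁻¹ ≤ 1 := by rw [inv_le_one_iff₀]; right; exact hx1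
        have hm' : (0:ℝ) ≤ m := Nat.cast_nonneg m
        nlinarith
      linarith
    exact_mod_cast h1
  have hbig : 96 * ((n : ℝ) + 1) ≤ (s ^ 2 / (8 * n)) ^ 4 := by
    have h1 : α ^ 2 * x / 2 ≤ s ^ 2 / (8 * n) := by
      rw [← hx3]
      rw [div_le_div_iff₀ (by norm_num) (by positivity)]
      have hsq : (2*α*x^2)^2 ≤ s^2 :=
        pow_le_pow_left₀ (by positivity) hsx 2
      nlinarith [hsq]
    have h2 : 96 * ((n:ℝ) + 1) ≤ (α ^ 2 * x / 2) ^ 4 := by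
      rw [← hx3]
      have hα8 : α ^ 8 * x ≥ 3072 := by
        have := hxc
        rw [hc, div_le_iff₀ (by positivity)] at this
        nlinarith [pow_pos hα0 8]
      have hx3' : 1 ≤ x ^ 3 := one_le_pow₀ hx1
      have expand : (α ^ 2 * x / 2) ^ 4 = (α ^ 8 * x) * x ^ 3 / 16 := by ring
      rw [expand]
      nlinarith [hα8, hx3', pow_pos hx0 3]
    calc 96 * ((n:ℝ) + 1) ≤ (α ^ 2 * x / 2) ^ 4 := h2
      _ ≤ (s ^ 2 / (8 * n)) ^ 4 := by
          apply pow_le_pow_left₀ (by positivity) h1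
  -- neighborhoods
  set NsO : Fin n → Finset (Fin n) := fun v => univ.filter (fun u => G v u) with hNsO
  set NsI : Fin n → Finset (Fin n) := fun v => univ.filter (fun u => G u v) with hNsI
  have hcard_out : ∀ v : Fin n, (Nat.card {u : Fin n // G v u}) = (NsO v).card := by
    intro v
    rw [Nat.card_eq_fintype_card, Fintype.card_subtype]
  have hcard_in : ∀ v : Fin n, (Nat.card {u : Fin n // G u v}) = (NsI v).card := by
    intro v
    rw [Nat.card_eq_fintype_card, Fintype.card_subtype]
  have hdO : ∀ v, δ * n ≤ ((NsO v).card : ℝ) := by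
    intro v
    have h := (hdeg v).1
    rwa [hcard_out v] at h
  have hdI : ∀ v, δ * n ≤ ((NsI v).card : ℝ) := by
    intro v
    have h := (hdeg v).2
    rwa [hcard_in v] at h
  set Ns : Fin n × Bool → Finset (Fin n) := fun p => if p.2 then NsO p.1 else NsI p.1 with hNs
  have hd0 : ∀ i, 0 < (Ns i).card := by
    rintro ⟨v, b⟩
    have hδn : (0:ℝ) < δ * n := by positivity
    cases b
    · have : (0:ℝ) < ((NsI v).card : ℝ) := lt_of_lt_of_le hδn (hdI v)
      have h2 : 0 < (NsI v).card := by exact_mod_cast this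
      simpa [hNs] using h2
    · have : (0:ℝ) < ((NsO v).card : ℝ) := lt_of_lt_of_le hδn (hdO v)
      have h2 : 0 < (NsO v).card := by exact_mod_cast this
      simpa [hNs] using h2
  obtain ⟨W, hWm, hWgood⟩ := exists_good Ns s hd0 hm0 h2m hks hsk hk7 hkm hs16 hbig
  -- main consequence for a single neighborhood
  have main : ∀ N : Finset (Fin n), δ * n ≤ (N.card : ℝ) →
      ((N.card : ℝ) * m / n - s < ((N ∩ W).card : ℝ)) →
      (((N ∩ W).card : ℝ) < (N.card : ℝ) * m / n + s) →
      ((δ - ε) * m ≤ ((N ∩ W).card : ℝ) ∧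
        (δ - ε) * ((n : ℝ) - m) ≤ ((N \ W).card : ℝ)) := by
    intro N hδN hlo hhi
    have hsd : ((N \ W).card : ℝ) = (N.card : ℝ) - ((N ∩ W).card : ℝ) := by
      have h := card_inter_add_card_sdiff N W
      push_cast [← h]
      ring
    have hem : ε * m = s := by rw [hs]
    constructor
    · have h1 : δ * m ≤ (N.card : ℝ) * m / n := by
        rw [le_div_iff₀ hnR]
        have hm' : (0:ℝ) ≤ m := Nat.cast_nonneg m
        nlinarith
      have hrw : (δ - ε) * m = δ * m - ε * m := by ring
      linarith [hrw, hem]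
    · have hmn2 : (m : ℝ) ≤ (n : ℝ) - m := by linarith
      have h1 : δ * ((n:ℝ) - m) ≤ (N.card : ℝ) * ((n:ℝ) - m) / n := by
        rw [le_div_iff₀ hnR]
        have h2 : (0:ℝ) ≤ (n:ℝ) - m := by linarith
        nlinarith
      have h2 : (N.card : ℝ) - ((N.card : ℝ) * m / n + s)
          = (N.card : ℝ) * ((n:ℝ) - m) / n - s := by
        field_simp
        ring
      have h3 : s ≤ ε * ((n:ℝ) - m) := by
        rw [← hem]
        have : (m:ℝ) ≤ (n:ℝ) - m := by linarith
        nlinarith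
      have hrw : (δ - ε) * ((n:ℝ) - m) = δ * ((n:ℝ) - m) - ε * ((n:ℝ) - m) := by ring
      linarith
  have hNsOW : ∀ v, Ns (v, true) = NsO v := fun v => rfl
  have hNsIW : ∀ v, Ns (v, false) = NsI v := fun v => rfl
  refine ⟨W, hWm, fun v _ => ?_, fun v hv => ?_⟩
  · have hO := hWgood (v, true)
    have hI := hWgood (v, false)
    rw [hNsOW] at hO
    rw [hNsIW] at hI
    have mo := main (NsO v) (hdO v) hO.1 hO.2
    have mi := main (NsI v) (hdI v) hI.1 hI.2
    constructor
    · have hh : (Nat.card {u : Fin n // u ∈ W ∧ G v u}) = ((NsO v) ∩ W).card := by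
        rw [Nat.card_eq_fintype_card, Fintype.card_subtype]
        congr 1
        ext u
        simp [hNsO, and_comm]
      rw [hh]
      exact mo.1
    · have hh : (Nat.card {u : Fin n // u ∈ W ∧ G u v}) = ((NsI v) ∩ W).card := by
        rw [Nat.card_eq_fintype_card, Fintype.card_subtype]
        congr 1
        ext u
        simp [hNsI, and_comm]
      rw [hh]
      exact mi.1
  · have hO := hWgood (v, true)
    have hI := hWgood (v, false)
    rw [hNsOW] at hO
    rw [hNsIW] at hI
    have mo := main (NsO v) (hdO v) hO.1 hO.2
    have mi := main (NsI v) (hdI v) hI.1 hI.2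
    constructor
    · have hh : (Nat.card {u : Fin n // u ∉ W ∧ G v u}) = ((NsO v) \ W).card := by
        rw [Nat.card_eq_fintype_card, Fintype.card_subtype]
        congr 1
        ext u
        simp [hNsO, mem_sdiff, and_comm]
      rw [hh]
      exact mo.2
    · have hh : (Nat.card {u : Fin n // u ∉ W ∧ G u v}) = ((NsI v) \ W).card := by
        rw [Nat.card_eq_fintype_card, Fintype.card_subtype]
        congr 1
        ext u
        simp [hNsI, mem_sdiff, and_comm]
      rw [hh]
      exact mi.2
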